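/- Let (X, d, μ) be an mm-space such that the support of μ is connected, and let m := μ(X). Then, for any r > 0 with α_X(r) > 0, the separation distance satisfies Sep(X; m/2, α_X(r)) ≤ r. -/
import Mathlib


open MeasureTheory Metric Set
open scoped ENNReal

/-- The partial diameter `diam(ν, a)`: the infimum of the diameters of Borel subsets of
measure at least `a`. -/
noncomputable def partialDiam {Y : Type*} [MetricSpace Y] [MeasurableSpace Y]
    (ν : Measure Y) (a : ℝ) : ℝ≥0∞ :=
  ⨅ (s : Set Y) (_ : MeasurableSet s) (_ : ENNReal.ofReal a ≤ ν s), EMetric.diam s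

/-- The observable diameter `diam(X →Lip₁ Y, a)`: the supremum over all `1`-Lipschitz maps
`f : X → Y` of the partial diameter of the push-forward measure. -/
noncomputable def obsDiam (Y : Type*) [MetricSpace Y] [MeasurableSpace Y]
    {X : Type*} [MetricSpace X] [MeasurableSpace X] (μ : Measure X) (a : ℝ) : ℝ≥0∞ :=
  ⨆ (f : X → Y) (_ : LipschitzWith 1 f), partialDiam (μ.map f) a

/-- The set of pre-Lévy means of `f`: points `a` with `f₊μ(-∞,a] ≥ m/2` and `f₊μ[a,∞) ≥ m/2`. -/
def preLevyMeans {X : Type*} [MeasurableSpace X] (μ : Measure X) (f : X → ℝ) : Set ℝ :=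
  {a : ℝ | μ Set.univ / 2 ≤ (μ.map f) (Set.Iic a) ∧ μ Set.univ / 2 ≤ (μ.map f) (Set.Ici a)}

/-- The Lévy mean `m_f := (min A_f + max A_f) / 2`. -/
noncomputable def levyMean {X : Type*} [MeasurableSpace X] (μ : Measure X) (f : X → ℝ) : ℝ :=
  (sInf (preLevyMeans μ f) + sSup (preLevyMeans μ f)) / 2

/-- The Lévy radius `LeRad(X; -κ)`. -/
noncomputable def leRad {X : Type*} [MetricSpace X] [MeasurableSpace X]
    (μ : Measure X) (κ : ℝ) : ℝ :=
  sInf {ρ : ℝ | 0 < ρ ∧ ∀ f : X → ℝ, LipschitzWith 1 f →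
    μ {x | ρ ≤ |f x - levyMean μ f|} ≤ ENNReal.ofReal κ}

/-- The concentration function `α_X(r)`, where `A_{+r}` is the open `r`-thickening. -/
noncomputable def concFn {X : Type*} [MetricSpace X] [MeasurableSpace X]
    (μ : Measure X) (r : ℝ) : ℝ :=
  sSup {v : ℝ | ∃ A : Set X, MeasurableSet A ∧ μ Set.univ / 2 ≤ μ A ∧
    v = (μ (Metric.thickening r A)ᶜ).toReal}

/-- The distance between two subsets: `inf {dist a b | a ∈ A, b ∈ B}`. -/
noncomputable def setDist {X : Type*} [MetricSpace X] (A B : Set X) : ℝ :=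
  sInf {d : ℝ | ∃ a ∈ A, ∃ b ∈ B, d = dist a b}

/-- The separation distance `Sep(X; κ₀, κ₁)`. -/
noncomputable def sep2 {X : Type*} [MetricSpace X] [MeasurableSpace X] (μ : Measure X)
    (κ₀ κ₁ : ℝ) : ℝ :=
  sSup {v : ℝ | ∃ A B : Set X, MeasurableSet A ∧ MeasurableSet B ∧
    ENNReal.ofReal κ₀ ≤ μ A ∧ ENNReal.ofReal κ₁ ≤ μ B ∧ v = setDist A B}

/-- The support of a measure on a metric space: points all of whose balls have
positive measure. -/
def measureSupport {X : Type*} [MetricSpace X] [MeasurableSpace X] (μ : Measure X) : Set X :=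
  {x : X | ∀ r : ℝ, 0 < r → 0 < μ (Metric.ball x r)}

/-- `V_p(f) = (∬ d_Y(f(x), f(x'))^p dμ dμ)^{1/p}`. -/
noncomputable def lipVar {X Y : Type*} [MeasurableSpace X] [MetricSpace Y]
    (μ : Measure X) (f : X → Y) (p : ℝ) : ℝ≥0∞ :=
  (∫⁻ x, ∫⁻ x', edist (f x) (f x') ^ p ∂μ ∂μ) ^ (1 / p)

/-- If the support of `μ` is connected, then for `r > 0` with `α_X(r) > 0`
one has `Sep(X; m/2, α_X(r)) ≤ r`. -/
theorem sep_le_of_connected_support {X : Type*} [MetricSpace X] [CompleteSpace X]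
    [TopologicalSpace.SeparableSpace X] [MeasurableSpace X] [BorelSpace X]
    (μ : Measure X) [IsFiniteMeasure μ]
    (hconn : IsConnected (measureSupport μ))
    (r : ℝ) (hr : 0 < r) (hα : 0 < concFn μ r) :
    sep2 μ ((μ Set.univ).toReal / 2) (concFn μ r) ≤ r := by
  classical
  have hm_top : μ Set.univ ≠ ⊤ := measure_ne_top μ _
  -- boundedness of the concentration set
  have hbdd : BddAbove {v : ℝ | ∃ A : Set X, MeasurableSet A ∧ μ Set.univ / 2 ≤ μ A ∧
      v = (μ (Metric.thickening r A)ᶜ).toReal} := by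
    refine ⟨(μ Set.univ).toReal, ?_⟩
    rintro v ⟨A, -, -, rfl⟩
    exact ENNReal.toReal_mono hm_top (measure_mono (Set.subset_univ _))
  have hm0 : μ Set.univ ≠ 0 := by
    intro h0
    have hμ0 : μ = 0 := by
      rwa [Measure.measure_univ_eq_zero] at h0
    have : concFn μ r ≤ 0 := by
      apply Real.sSup_le _ le_rfl
      rintro v ⟨A, -, -, rfl⟩
      simp [hμ0]
    linarith
  have hm_pos : 0 < (μ Set.univ).toReal := ENNReal.toReal_pos hm0 hm_top
  have hhalf : ENNReal.ofReal ((μ Set.univ).toReal / 2) = μ Set.univ / 2 := by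
    rw [ENNReal.ofReal_div_of_pos (by norm_num), ENNReal.ofReal_toReal hm_top]
    norm_num
  -- null complement of the support (needs second countability)
  haveI : SecondCountableTopology X :=
    UniformSpace.secondCountable_of_separable X
  have hSc : μ (measureSupport μ)ᶜ = 0 := by
    have hball : ∀ x : ((measureSupport μ)ᶜ : Set X), ∃ ρ : ℝ, 0 < ρ ∧ μ (Metric.ball (x : X) ρ) = 0 := by
      rintro ⟨x, hx⟩
      simp only [measureSupport, Set.mem_compl_iff, Set.mem_setOf_eq, not_forall] at hx
      obtain ⟨ρ, hρ, h⟩ := hx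
      exact ⟨ρ, hρ, by simpa using h⟩
    choose ρ hρpos hρ0 using hball
    set s : ((measureSupport μ)ᶜ : Set X) → Set X := fun x => Metric.ball (x : X) (ρ x) with hs
    obtain ⟨T, hTc, hTeq⟩ := TopologicalSpace.isOpen_iUnion_countable s (fun x => Metric.isOpen_ball)
    have hcover : (measureSupport μ)ᶜ ⊆ ⋃ i, s i := fun x hx =>
      Set.mem_iUnion.mpr ⟨⟨x, hx⟩, Metric.mem_ball_self (hρpos _)⟩
    refine measure_mono_null hcover ?_
    rw [← hTeq]
    exact (measure_biUnion_null_iff hTc).mpr fun i _ => hρ0 i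
  -- main estimate
  apply Real.sSup_le _ hr.le
  rintro v ⟨A, B, hAm, hBm, hμA, hμB, rfl⟩
  by_contra hlt
  push_neg at hlt
  rw [hhalf] at hμA
  have hA_pos : 0 < μ A := lt_of_lt_of_le (by
    rw [← hhalf]; exact ENNReal.ofReal_pos.mpr (by positivity)) hμA
  have hB_pos : 0 < μ B := lt_of_lt_of_le (ENNReal.ofReal_pos.mpr hα) hμB
  have hA_ne : A.Nonempty := nonempty_of_measure_ne_zero hA_pos.ne'
  -- B is outside any thickening of A of radius ≤ setDist A B
  have hBout : ∀ b ∈ B, ∀ t : ℝ, t ≤ setDist A B → b ∉ Metric.thickening t A := by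
    intro b hb t ht hmem
    rw [Metric.mem_thickening_iff] at hmem
    obtain ⟨a, ha, hd⟩ := hmem
    have hle : setDist A B ≤ dist a b := by
      apply csInf_le
      · exact ⟨0, by rintro d ⟨a', -, b', -, rfl⟩; exact dist_nonneg⟩
      · exact ⟨a, ha, b, hb, rfl⟩
    rw [dist_comm] at hd
    linarith
  set r' : ℝ := (r + setDist A B) / 2 with hr'def
  have hr'1 : r < r' := by simp only [hr'def]; linarith
  have hr'2 : r' < setDist A B := by simp only [hr'def]; linarith
  have hBsub : B ⊆ (Metric.thickening r' A)ᶜ := fun b hb => hBout b hb r' hr'2.le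
  -- key: all measures of complements of thickenings of A of radius in (r, r'] equal ofReal α
  have K : ∀ t : ℝ, r < t → t ≤ r' → μ (Metric.thickening t A)ᶜ = ENNReal.ofReal (concFn μ r) := by
    intro t ht1 ht2
    set A'' := Metric.thickening (t - r) A with hA''def
    have hsub1 : Metric.thickening r A'' ⊆ Metric.thickening t A := by
      have h := Metric.thickening_thickening_subset r (t - r) A
      rwa [show r + (t - r) = t by ring] at h
    have hAA'' : A ⊆ A'' := Metric.self_subset_thickening (by linarith) A
    have hmem : (μ (Metric.thickening r A'')ᶜ).toReal ∈ {v : ℝ | ∃ A : Set X, MeasurableSet A ∧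
        μ Set.univ / 2 ≤ μ A ∧ v = (μ (Metric.thickening r A)ᶜ).toReal} :=
      ⟨A'', Metric.isOpen_thickening.measurableSet, le_trans hμA (measure_mono hAA''), rfl⟩
    have hv : (μ (Metric.thickening r A'')ᶜ).toReal ≤ concFn μ r := le_csSup hbdd hmem
    have h1 : ENNReal.ofReal (concFn μ r) ≤ μ (Metric.thickening t A)ᶜ :=
      le_trans (le_trans hμB (measure_mono hBsub))
        (measure_mono (Set.compl_subset_compl.mpr (Metric.thickening_mono ht2 A)))
    have h2 : μ (Metric.thickening t A)ᶜ ≤ ENNReal.ofReal (concFn μ r) := by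
      calc μ (Metric.thickening t A)ᶜ ≤ μ (Metric.thickening r A'')ᶜ :=
            measure_mono (Set.compl_subset_compl.mpr hsub1)
        _ ≤ ENNReal.ofReal (concFn μ r) := by
            rw [← ENNReal.ofReal_toReal (measure_ne_top μ (Metric.thickening r A'')ᶜ)]
            exact ENNReal.ofReal_le_ofReal hv
    exact le_antisymm h2 h1
  -- annuli are null
  have hann : ∀ t : ℝ, r < t →
      μ {x | t ≤ Metric.infDist x A ∧ Metric.infDist x A < r'} = 0 := by
    intro t ht
    by_cases hcase : t ≤ r'
    · have h1 := K t ht hcase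
      have h2 := K r' hr'1 le_rfl
      have hsub : (Metric.thickening r' A)ᶜ ⊆ (Metric.thickening t A)ᶜ :=
        Set.compl_subset_compl.mpr (Metric.thickening_mono hcase A)
      have hdiff : μ ((Metric.thickening t A)ᶜ \ (Metric.thickening r' A)ᶜ) = 0 := by
        rw [measure_diff hsub Metric.isOpen_thickening.measurableSet.compl.nullMeasurableSet
          (measure_ne_top μ _), h1, h2, tsub_self]
      refine measure_mono_null ?_ hdiff
      rintro x ⟨hx1, hx2⟩
      constructor
      · rw [Set.mem_compl_iff, Metric.mem_thickening_iff_infDist_lt hA_ne]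
        linarith
      · rw [Set.notMem_compl_iff, Metric.mem_thickening_iff_infDist_lt hA_ne]
        exact hx2
    · push_neg at hcase
      refine measure_mono_null ?_ (measure_empty (μ := μ))
      rintro x ⟨hx1, hx2⟩
      exact absurd rfl (by linarith : ¬ (x = x))
  have hU : μ {x | r < Metric.infDist x A ∧ Metric.infDist x A < r'} = 0 := by
    have hsub : {x | r < Metric.infDist x A ∧ Metric.infDist x A < r'} ⊆
        ⋃ n : ℕ, {x | r + 1 / (n + 1) ≤ Metric.infDist x A ∧ Metric.infDist x A < r'} := by
      rintro x ⟨h1, h2⟩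
      obtain ⟨n, hn⟩ := exists_nat_one_div_lt (show 0 < Metric.infDist x A - r by linarith)
      exact Set.mem_iUnion.mpr ⟨n, ⟨by linarith, h2⟩⟩
    refine measure_mono_null hsub (measure_iUnion_null fun n => hann _ ?_)
    have : (0:ℝ) < 1 / (n + 1) := by positivity
    linarith
  -- no support point in the open annulus
  have hUS : ∀ x ∈ measureSupport μ,
      ¬ (r < Metric.infDist x A ∧ Metric.infDist x A < r') := by
    intro x hx hmem
    have hopen : IsOpen {y | r < Metric.infDist y A ∧ Metric.infDist y A < r'} :=
      IsOpen.inter (isOpen_lt continuous_const (Metric.continuous_infDist_pt A))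
        (isOpen_lt (Metric.continuous_infDist_pt A) continuous_const)
    obtain ⟨ε, hε, hball⟩ := Metric.isOpen_iff.mp hopen x hmem
    have : 0 < μ {y | r < Metric.infDist y A ∧ Metric.infDist y A < r'} :=
      lt_of_lt_of_le (hx ε hε) (measure_mono hball)
    rw [hU] at this
    exact lt_irrefl 0 this
  -- connectedness contradiction
  set t₀ : ℝ := (r + r') / 2 with ht₀def
  have ht₀1 : r < t₀ := by simp only [ht₀def]; linarith
  have ht₀2 : t₀ < r' := by simp only [ht₀def]; linarith
  set V₁ : Set X := {x | Metric.infDist x A < t₀} with hV₁def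
  set V₂ : Set X := {x | t₀ < Metric.infDist x A} with hV₂def
  have hV₁o : IsOpen V₁ := isOpen_lt (Metric.continuous_infDist_pt A) continuous_const
  have hV₂o : IsOpen V₂ := isOpen_lt continuous_const (Metric.continuous_infDist_pt A)
  have hScover : measureSupport μ ⊆ V₁ ∪ V₂ := by
    intro x hx
    rcases lt_trichotomy (Metric.infDist x A) t₀ with h | h | h
    · exact Or.inl h
    · exact absurd ⟨h ▸ ht₀1, h ▸ ht₀2⟩ (hUS x hx)
    · exact Or.inr h
  have hS1 : (measureSupport μ ∩ V₁).Nonempty := by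
    by_contra h
    rw [Set.not_nonempty_iff_eq_empty] at h
    have hsub : V₁ ⊆ (measureSupport μ)ᶜ := by
      intro x hxV hxS
      exact Set.eq_empty_iff_forall_notMem.mp h x ⟨hxS, hxV⟩
    have hAV : A ⊆ V₁ := by
      intro a ha
      simp only [hV₁def, Set.mem_setOf_eq, Metric.infDist_zero_of_mem ha]
      linarith
    have : μ A = 0 := measure_mono_null (hAV.trans hsub) hSc
    exact hA_pos.ne' this
  have hS2 : (measureSupport μ ∩ V₂).Nonempty := by
    by_contra h
    rw [Set.not_nonempty_iff_eq_empty] at h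
    have hsub : V₂ ⊆ (measureSupport μ)ᶜ := by
      intro x hxV hxS
      exact Set.eq_empty_iff_forall_notMem.mp h x ⟨hxS, hxV⟩
    have hBV : B ⊆ V₂ := by
      intro b hb
      have hnb := hBsub hb
      rw [Set.mem_compl_iff, Metric.mem_thickening_iff_infDist_lt hA_ne] at hnb
      push_neg at hnb
      simp only [hV₂def, Set.mem_setOf_eq]
      linarith
    have : μ B = 0 := measure_mono_null (hBV.trans hsub) hSc
    exact hB_pos.ne' this
  obtain ⟨x, -, hx1, hx2⟩ := hconn.isPreconnected V₁ V₂ hV₁o hV₂o hScover hS1 hS2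
  simp only [hV₁def, hV₂def, Set.mem_setOf_eq] at hx1 hx2
  linarith
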